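/- Let n ≥ 2 and let X ⊆ ℝⁿ be a polytope with exactly 3 vertices (extreme points). Then there exists a finite set D ⊆ ℝⁿ of directions with |D| ≤ 5n - 1 such that D determines X within the class of all polytopes in ℝⁿ having at most 3 extreme points. (Convergence of Algorithm 3 in the case n_v = 3 with known bound n̄ = 3: it terminates after at most 5n - 1 oracle calls with X_v = S_v.) -/

import Mathlib

open RealInnerProductSpace

/-- Support function of a subset of `ℝⁿ`. -/
noncomputable def supp {n : ℕ} (X : Set (EuclideanSpace ℝ (Fin n)))
    (d : EuclideanSpace ℝ (Fin n)) : ℝ :=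
  sSup ((fun v => ⟪v, d⟫) '' X)

/-- `X` is a polytope: the convex hull of a nonempty finite set. -/
def IsPolytope {n : ℕ} (X : Set (EuclideanSpace ℝ (Fin n))) : Prop :=
  ∃ F : Finset (EuclideanSpace ℝ (Fin n)), F.Nonempty ∧ X = convexHull ℝ (F : Set _)

/-- The finite direction set `D` determines `X` within the class `𝒞`. -/
def Determines {n : ℕ} (𝒞 : Set (Set (EuclideanSpace ℝ (Fin n))))
    (D : Finset (EuclideanSpace ℝ (Fin n))) (X : Set (EuclideanSpace ℝ (Fin n))) : Prop :=
  ∀ Y ∈ 𝒞, (∀ d ∈ D, supp Y d = supp X d) → Y = X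

namespace S13
variable {n : ℕ}

lemma isCompact_poly {X : Set (EuclideanSpace ℝ (Fin n))} (h : IsPolytope X) : IsCompact X := by
  obtain ⟨F, -, rfl⟩ := h
  exact F.finite_toSet.isCompact_convexHull ℝ

lemma convex_poly {X : Set (EuclideanSpace ℝ (Fin n))} (h : IsPolytope X) : Convex ℝ X := by
  obtain ⟨F, -, rfl⟩ := h; exact convex_convexHull ℝ _

lemma nonempty_poly {X : Set (EuclideanSpace ℝ (Fin n))} (h : IsPolytope X) : X.Nonempty := by
  obtain ⟨F, hF, rfl⟩ := h
  exact hF.to_set.mono (subset_convexHull ℝ _)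

lemma inner_le_supp {X : Set (EuclideanSpace ℝ (Fin n))} (h : IsPolytope X)
    {y : EuclideanSpace ℝ (Fin n)} (hy : y ∈ X) (d : EuclideanSpace ℝ (Fin n)) :
    ⟪y, d⟫ ≤ supp X d := by
  refine le_csSup ?_ ⟨y, hy, rfl⟩
  exact ((isCompact_poly h).image (Continuous.inner continuous_id continuous_const)).bddAbove

lemma exists_inner_eq_supp {X : Set (EuclideanSpace ℝ (Fin n))} (h : IsPolytope X)
    (d : EuclideanSpace ℝ (Fin n)) : ∃ y ∈ X, ⟪y, d⟫ = supp X d := by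
  have hc : IsCompact ((fun v => ⟪v, d⟫) '' X) := (isCompact_poly h).image (Continuous.inner continuous_id continuous_const)
  have hne : ((fun v => ⟪v, d⟫) '' X).Nonempty := (nonempty_poly h).image _
  obtain ⟨y, hy, hy2⟩ := hc.sSup_mem hne
  exact ⟨y, hy, hy2⟩

lemma supp_le {X : Set (EuclideanSpace ℝ (Fin n))} (h : X.Nonempty) {d : EuclideanSpace ℝ (Fin n)}
    {c : ℝ} (hc : ∀ y ∈ X, ⟪y, d⟫ ≤ c) : supp X d ≤ c := by
  refine csSup_le (h.image _) ?_
  rintro r ⟨y, hy, rfl⟩; exact hc y hy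


variable {n : ℕ}

-- strict Cauchy-Schwarz for linearly independent pair
lemma strictCS {w₁ w₂ : EuclideanSpace ℝ (Fin n)} (h : LinearIndependent ℝ ![w₁, w₂]) :
    ⟪w₂, w₁⟫ * ⟪w₂, w₁⟫ < ⟪w₁, w₁⟫ * ⟪w₂, w₂⟫ := by
  rw [linearIndependent_fin2] at h
  obtain ⟨h1, h2⟩ := h
  simp only [Matrix.cons_val_one, Matrix.head_cons, Matrix.cons_val_zero] at h1 h2
  have hw2 : ‖w₂‖ ≠ 0 := norm_ne_zero_iff.mpr h1
  have hlt1 : ⟪w₁, w₂⟫ < ‖w₁‖ * ‖w₂‖ := by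
    rw [inner_lt_norm_mul_iff_real]
    intro hc
    refine h2 (‖w₁‖ / ‖w₂‖) ?_
    rw [div_eq_inv_mul, mul_smul, ← hc, smul_smul, inv_mul_cancel₀ hw2, one_smul]
  have hlt2 : ⟪w₁, -w₂⟫ < ‖w₁‖ * ‖-w₂‖ := by
    rw [inner_lt_norm_mul_iff_real]
    intro hc
    rw [norm_neg] at hc
    refine h2 (-(‖w₁‖ / ‖w₂‖)) ?_
    rw [smul_neg, ← neg_smul] at hc
    calc (-(‖w₁‖ / ‖w₂‖)) • w₂ = ‖w₂‖⁻¹ • ((-‖w₁‖) • w₂) := by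
          rw [smul_smul]; congr 1; field_simp
      _ = ‖w₂‖⁻¹ • (‖w₂‖ • w₁) := by rw [hc]
      _ = w₁ := by rw [smul_smul, inv_mul_cancel₀ hw2, one_smul]
  rw [inner_neg_right, norm_neg] at hlt2
  have habs : |⟪w₁, w₂⟫| < ‖w₁‖ * ‖w₂‖ := abs_lt.mpr ⟨by linarith, hlt1⟩
  have h0 : (0:ℝ) ≤ |⟪w₁, w₂⟫| := abs_nonneg _
  have := mul_self_lt_mul_self h0 habs
  rw [abs_mul_abs_self] at this
  calc ⟪w₂, w₁⟫ * ⟪w₂, w₁⟫ = ⟪w₁, w₂⟫ * ⟪w₁, w₂⟫ := by rw [real_inner_comm]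
    _ < ‖w₁‖ * ‖w₂‖ * (‖w₁‖ * ‖w₂‖) := this
    _ = ⟪w₁, w₁⟫ * ⟪w₂, w₂⟫ := by
        rw [real_inner_self_eq_norm_mul_norm, real_inner_self_eq_norm_mul_norm]; ring

lemma edge_dir {w₁ w₂ : EuclideanSpace ℝ (Fin n)} (h : LinearIndependent ℝ ![w₁, w₂]) :
    ∃ d : EuclideanSpace ℝ (Fin n), ⟪w₁, d⟫ = 0 ∧ ⟪w₂, d⟫ < 0 := by
  refine ⟨⟪w₂, w₁⟫ • w₁ - ⟪w₁, w₁⟫ • w₂, ?_, ?_⟩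
  · rw [inner_sub_right, real_inner_smul_right, real_inner_smul_right, real_inner_comm w₁ w₂]
    ring
  · rw [inner_sub_right, real_inner_smul_right, real_inner_smul_right]
    have hcs := strictCS h
    linarith [hcs]


variable {n : ℕ}

lemma li_of_extreme {X : Set (EuclideanSpace ℝ (Fin n))} {a b c : EuclideanSpace ℝ (Fin n)}
    (ha : a ∈ X.extremePoints ℝ) (hb : b ∈ X.extremePoints ℝ) (hc : c ∈ X.extremePoints ℝ)
    (hab : a ≠ b) (hac : a ≠ c) (hbc : b ≠ c) :
    LinearIndependent ℝ ![b - a, c - a] := by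
  have haX : a ∈ X := extremePoints_subset ha
  have hbX : b ∈ X := extremePoints_subset hb
  have hcX : c ∈ X := extremePoints_subset hc
  rw [linearIndependent_fin2]
  constructor
  · simp only [Matrix.cons_val_one, Matrix.head_cons, Matrix.cons_val_zero]
    exact fun h => hac (by rwa [sub_eq_zero, eq_comm] at h)
  · simp only [Matrix.cons_val_one, Matrix.head_cons, Matrix.cons_val_zero]
    intro r hr
    have hbeq : b = a + r • (c - a) := by rw [hr]; abel
    rcases lt_trichotomy r 0 with hr0 | hr0 | hr0
    · -- a ∈ openSegment b c
      have h1r : (0:ℝ) < 1 - r := by linarith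
      have hmem : a ∈ openSegment ℝ b c := by
        refine ⟨1/(1-r), -r/(1-r), by positivity, div_pos (by linarith) h1r, by field_simp; ring, ?_⟩
        rw [hbeq]; match_scalars <;> (field_simp; try ring)
      have := ((mem_extremePoints.mp ha).2 b hbX c hcX hmem).1
      exact hab this.symm
    · exact hab (by rw [hr0, zero_smul, add_zero] at hbeq; exact hbeq.symm)
    · rcases lt_trichotomy r 1 with hr1 | hr1 | hr1
      · -- b ∈ openSegment a c
        have hmem : b ∈ openSegment ℝ a c := by
          refine ⟨1 - r, r, by linarith, hr0, by ring, ?_⟩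
          rw [hbeq]; match_scalars <;> ring
        have := ((mem_extremePoints.mp hb).2 a haX c hcX hmem).1
        exact hab this
      · exact hbc (by rw [hr1, one_smul] at hbeq; rw [hbeq]; abel)
      · -- c ∈ openSegment a b
        have hmem : c ∈ openSegment ℝ a b := by
          refine ⟨1 - 1/r, 1/r, by
            have : 1/r < 1 := by rw [div_lt_one (by linarith)]; linarith
            linarith, by positivity, by ring, ?_⟩
          rw [hbeq]; match_scalars <;> (field_simp; try ring)
        have := ((mem_extremePoints.mp hc).2 a haX b hbX hmem).1
        exact hac this

end S13

set_option maxHeartbeats 4000000 in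
/-- a polytope `X ⊆ ℝⁿ` (`n ≥ 2`) with exactly `3` vertices is
determined by at most `5n - 1` directions within the class of polytopes in `ℝⁿ`
with at most `3` extreme points. -/
theorem stmt_13 (n : ℕ) (hn : 2 ≤ n) (X : Set (EuclideanSpace ℝ (Fin n)))
    (hX : IsPolytope X) (hcard : (Set.extremePoints ℝ X).ncard = 3) :
    ∃ D : Finset (EuclideanSpace ℝ (Fin n)), D.card ≤ 5 * n - 1 ∧
      Determines {Y | IsPolytope Y ∧ (Set.extremePoints ℝ Y).ncard ≤ 3} D X := by
  classical
  obtain ⟨x1, x2, x3, h12, h13, h23, hE⟩ := Set.ncard_eq_three.mp hcard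
  have hx1 : x1 ∈ X.extremePoints ℝ := by rw [hE]; exact Set.mem_insert _ _
  have hx2 : x2 ∈ X.extremePoints ℝ := by rw [hE]; simp
  have hx3 : x3 ∈ X.extremePoints ℝ := by rw [hE]; simp
  have hcomp := S13.isCompact_poly hX
  have hconv := S13.convex_poly hX
  have hKM : closure (convexHull ℝ (X.extremePoints ℝ)) = X :=
    closure_convexHull_extremePoints hcomp hconv
  rw [hE] at hKM
  have hfin : ({x1, x2, x3} : Set (EuclideanSpace ℝ (Fin n))).Finite := Set.toFinite _
  have hXhull : X = convexHull ℝ ({x1, x2, x3} : Set (EuclideanSpace ℝ (Fin n))) := by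
    rw [← hKM, IsClosed.closure_eq (hfin.isCompact_convexHull ℝ).isClosed]
  have hLI_A : LinearIndependent ℝ ![x2 - x1, x3 - x1] :=
    S13.li_of_extreme hx1 hx2 hx3 h12 h13 h23
  have hLI_B : LinearIndependent ℝ ![x3 - x1, x2 - x1] :=
    S13.li_of_extreme hx1 hx3 hx2 h13 h12 h23.symm
  have hLI_C : LinearIndependent ℝ ![x3 - x2, x1 - x2] :=
    S13.li_of_extreme hx2 hx3 hx1 h23 h12.symm h13.symm
  have hLI_D : LinearIndependent ℝ ![x1 - x2, x3 - x2] :=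
    S13.li_of_extreme hx2 hx1 hx3 h12.symm h23 h13
  have hLI_E : LinearIndependent ℝ ![x1 - x3, x2 - x3] :=
    S13.li_of_extreme hx3 hx1 hx2 h13.symm h23.symm h12
  have hLI_F : LinearIndependent ℝ ![x2 - x3, x1 - x3] :=
    S13.li_of_extreme hx3 hx2 hx1 h23.symm h13.symm h12.symm
  obtain ⟨dA, hdA0, hdA1⟩ := S13.edge_dir hLI_A
  obtain ⟨dB, hdB0, hdB1⟩ := S13.edge_dir hLI_B
  obtain ⟨dC, hdC0, hdC1⟩ := S13.edge_dir hLI_C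
  obtain ⟨dD, hdD0, hdD1⟩ := S13.edge_dir hLI_D
  obtain ⟨dE, hdE0, hdE1⟩ := S13.edge_dir hLI_E
  obtain ⟨dF, hdF0, hdF1⟩ := S13.edge_dir hLI_F
  set u1 := dA + dB with hu1
  set u2 := dC + dD with hu2
  set u3 := dE + dF with hu3
  set K : Submodule ℝ (EuclideanSpace ℝ (Fin n)) :=
    Submodule.span ℝ ({x2 - x1, x3 - x1} : Set (EuclideanSpace ℝ (Fin n))) with hK
  have hKfr : Module.finrank ℝ K = 2 := by
    have hre : ({x2 - x1, x3 - x1} : Set (EuclideanSpace ℝ (Fin n)))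
        = Set.range ![x2 - x1, x3 - x1] := by
      ext z; simp [Fin.exists_fin_two, or_comm]
    rw [hK, hre, finrank_span_eq_card hLI_A]
    simp
  have hWfr : Module.finrank ℝ (Kᗮ) + 2 = n := by
    have h1 := Submodule.finrank_add_finrank_orthogonal K
    rw [hKfr, finrank_euclideanSpace_fin] at h1
    omega
  set m := Module.finrank ℝ (Kᗮ) with hm
  set b := Module.finBasis ℝ (Kᗮ) with hb
  set B : Finset (EuclideanSpace ℝ (Fin n)) :=
    Finset.image (fun i : Fin m => ((b i : Kᗮ) : EuclideanSpace ℝ (Fin n))) Finset.univ with hB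
  set D : Finset (EuclideanSpace ℝ (Fin n)) :=
    ([dA, dB, dC, u1, u2, u3].toFinset ∪ B ∪ B.image (fun w => -w)) with hD
  refine ⟨D, ?_, ?_⟩
  · have hB1 : B.card ≤ m := le_trans (Finset.card_image_le) (by simp)
    have hB2 : (B.image (fun w => -w)).card ≤ m := le_trans (Finset.card_image_le) hB1
    have h6 : ([dA, dB, dC, u1, u2, u3] : List _).toFinset.card ≤ 6 :=
      le_trans (List.toFinset_card_le _) (by simp)
    calc D.card ≤ ([dA, dB, dC, u1, u2, u3].toFinset ∪ B).card + (B.image (fun w => -w)).card :=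
          Finset.card_union_le _ _
      _ ≤ ([dA, dB, dC, u1, u2, u3].toFinset.card + B.card) + (B.image (fun w => -w)).card :=
          Nat.add_le_add_right (Finset.card_union_le _ _) _
      _ ≤ (6 + m) + m := by omega
      _ ≤ 5 * n - 1 := by omega
  · set Mf : EuclideanSpace ℝ (Fin n) → ℝ :=
      fun d => max ⟪x1, d⟫ (max ⟪x2, d⟫ ⟪x3, d⟫) with hMf
    have hsuppX : ∀ d, supp X d = Mf d := by
      intro d
      apply le_antisymm
      · apply S13.supp_le (S13.nonempty_poly hX)
        intro y hy
        rw [hXhull] at hy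
        have hhalf : Convex ℝ {z : EuclideanSpace ℝ (Fin n) | ⟪z, d⟫ ≤ Mf d} :=
          convex_halfSpace_le ⟨fun a b => inner_add_left a b d,
            fun r a => real_inner_smul_left a d r⟩ _
        have hsub : ({x1, x2, x3} : Set (EuclideanSpace ℝ (Fin n))) ⊆
            {z | ⟪z, d⟫ ≤ Mf d} := by
          intro z hz
          simp only [Set.mem_insert_iff, Set.mem_singleton_iff] at hz
          rcases hz with rfl | rfl | rfl <;> simp [hMf, le_max_iff, le_refl]
        exact convexHull_min hsub hhalf hy
      · have hmem : ∀ z ∈ ({x1, x2, x3} : Set (EuclideanSpace ℝ (Fin n))),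
            ⟪z, d⟫ ≤ supp X d := fun z hz =>
          S13.inner_le_supp hX (by rw [hXhull]; exact subset_convexHull ℝ _ hz) d
        have e1 := hmem x1 (by simp)
        have e2 := hmem x2 (by simp)
        have e3 := hmem x3 (by simp)
        simp only [hMf, max_le_iff]
        exact ⟨e1, e2, e3⟩
    have hBmem : ∀ i : Fin m, ((b i : Kᗮ) : EuclideanSpace ℝ (Fin n)) ∈ B :=
      fun i => Finset.mem_image_of_mem _ (Finset.mem_univ i)
    have hbD : ∀ i : Fin m, ((b i : Kᗮ) : EuclideanSpace ℝ (Fin n)) ∈ D :=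
      fun i => Finset.mem_union_left _ (Finset.mem_union_right _ (hBmem i))
    have hbD' : ∀ i : Fin m, (-((b i : Kᗮ) : EuclideanSpace ℝ (Fin n))) ∈ D :=
      fun i => Finset.mem_union_right _ (Finset.mem_image_of_mem _ (hBmem i))
    have hlist : ∀ z ∈ [dA, dB, dC, u1, u2, u3], z ∈ D := fun z hz =>
      Finset.mem_union_left _ (Finset.mem_union_left _ (List.mem_toFinset.mpr hz))
    have hdAD : dA ∈ D := hlist dA (by simp)
    have hdBD : dB ∈ D := hlist dB (by simp)
    have hdCD : dC ∈ D := hlist dC (by simp)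
    have hu1D : u1 ∈ D := hlist u1 (by simp)
    have hu2D : u2 ∈ D := hlist u2 (by simp)
    have hu3D : u3 ∈ D := hlist u3 (by simp)
    have hMw : ∀ w ∈ Kᗮ, Mf w = ⟪x1, w⟫ := by
      intro w hw
      rw [Submodule.mem_orthogonal] at hw
      have h1 : ⟪x2 - x1, w⟫ = 0 := hw _ (Submodule.subset_span (by simp))
      have h2 : ⟪x3 - x1, w⟫ = 0 := hw _ (Submodule.subset_span (by simp))
      have e2 : ⟪x2, w⟫ = ⟪x1, w⟫ := by
        have h := inner_sub_left (𝕜 := ℝ) x2 x1 w; linarith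
      have e3 : ⟪x3, w⟫ = ⟪x1, w⟫ := by
        have h := inner_sub_left (𝕜 := ℝ) x3 x1 w; linarith
      simp only [hMf]
      rw [e2, e3, max_self, max_self]
    have hdec : ∀ y : EuclideanSpace ℝ (Fin n), (∀ d ∈ D, ⟪y, d⟫ ≤ Mf d) →
        ∃ s t : ℝ, 0 ≤ s ∧ 0 ≤ t ∧ s + t ≤ 1 ∧
          y = x1 + s • (x2 - x1) + t • (x3 - x1) := by
      intro y hy
      have hyeq0 : ∀ i : Fin m, ⟪y - x1, ((b i : Kᗮ) : EuclideanSpace ℝ (Fin n))⟫ = 0 := by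
        intro i
        have hwmem := (b i).2
        have h1 := hy _ (hbD i)
        have h2 := hy _ (hbD' i)
        rw [hMw _ hwmem] at h1
        rw [hMw _ (Submodule.neg_mem _ hwmem), inner_neg_right, inner_neg_right] at h2
        rw [inner_sub_left]
        linarith
      have hyK : y - x1 ∈ K := by
        rw [← Submodule.orthogonal_orthogonal K, Submodule.mem_orthogonal']
        intro w hw
        set L : Kᗮ →ₗ[ℝ] ℝ :=
          ((innerSL ℝ (y - x1)).toLinearMap).comp (Kᗮ.subtype) with hL
        have hL0 : L = 0 := by
          apply Module.Basis.ext b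
          intro i
          have hti := hyeq0 i
          rw [inner_sub_left] at hti
          simpa [hL] using hti
        have hLw : L ⟨w, hw⟩ = 0 := by rw [hL0]; rfl
        rw [inner_sub_left]
        simpa [hL] using hLw
      rw [hK] at hyK
      obtain ⟨s, t, hst⟩ := Submodule.mem_span_pair.mp hyK
      have hexp : ∀ d : EuclideanSpace ℝ (Fin n),
          ⟪y, d⟫ - ⟪x1, d⟫ = s * ⟪x2 - x1, d⟫ + t * ⟪x3 - x1, d⟫ := by
        intro d
        rw [← inner_sub_left, ← hst, inner_add_left, real_inner_smul_left,
          real_inner_smul_left]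
      have hMA : Mf dA = ⟪x1, dA⟫ := by
        have e2 : ⟪x2, dA⟫ = ⟪x1, dA⟫ := by
          have h := inner_sub_left (𝕜 := ℝ) x2 x1 dA; linarith
        have e3 : ⟪x3, dA⟫ ≤ ⟪x1, dA⟫ := by
          have h := inner_sub_left (𝕜 := ℝ) x3 x1 dA; linarith
        have : max ⟪x2, dA⟫ ⟪x3, dA⟫ ≤ ⟪x1, dA⟫ := max_le (le_of_eq e2) e3
        simp only [hMf]
        exact max_eq_left this
      have ht : 0 ≤ t := by
        have h1 := hy dA hdAD
        rw [hMA] at h1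
        have h2 := hexp dA
        rw [hdA0] at h2
        by_contra hcon
        push_neg at hcon
        nlinarith [hdA1]
      have hMB : Mf dB = ⟪x1, dB⟫ := by
        have e3 : ⟪x3, dB⟫ = ⟪x1, dB⟫ := by
          have h := inner_sub_left (𝕜 := ℝ) x3 x1 dB; linarith
        have e2 : ⟪x2, dB⟫ ≤ ⟪x1, dB⟫ := by
          have h := inner_sub_left (𝕜 := ℝ) x2 x1 dB; linarith
        have : max ⟪x2, dB⟫ ⟪x3, dB⟫ ≤ ⟪x1, dB⟫ := max_le e2 (le_of_eq e3)
        simp only [hMf]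
        exact max_eq_left this
      have hs : 0 ≤ s := by
        have h1 := hy dB hdBD
        rw [hMB] at h1
        have h2 := hexp dB
        rw [hdB0] at h2
        by_contra hcon
        push_neg at hcon
        nlinarith [hdB1]
      have hsum : s + t ≤ 1 := by
        have h1 := hy dC hdCD
        have ha := inner_sub_left (𝕜 := ℝ) x3 x2 dC
        have hb := inner_sub_left (𝕜 := ℝ) x2 x1 dC
        have hc := inner_sub_left (𝕜 := ℝ) x3 x1 dC
        have hd := inner_sub_left (𝕜 := ℝ) x1 x2 dC
        have r1 : ⟪x3 - x1, dC⟫ = ⟪x2 - x1, dC⟫ := by linarith [hdC0]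
        have r2 : 0 < ⟪x2 - x1, dC⟫ := by linarith [hdC1]
        have hMC : Mf dC = ⟪x2, dC⟫ := by
          have e3 : ⟪x3, dC⟫ = ⟪x2, dC⟫ := by linarith [hdC0]
          have e1 : ⟪x1, dC⟫ ≤ ⟪x2, dC⟫ := by linarith [hdC1]
          simp only [hMf]
          rw [e3, max_self, max_eq_right e1]
        rw [hMC] at h1
        have h2 := hexp dC
        rw [r1] at h2
        by_contra hcon
        push_neg at hcon
        nlinarith [r2]
      refine ⟨s, t, hs, ht, hsum, (sub_eq_zero.mp ?_)⟩
      have hre : y - (x1 + s • (x2 - x1) + t • (x3 - x1))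
          = (y - x1) - (s • (x2 - x1) + t • (x3 - x1)) := by abel
      rw [hre, hst, sub_self]
    have hback : ∀ s t : ℝ, 0 ≤ s → 0 ≤ t → s + t ≤ 1 →
        x1 + s • (x2 - x1) + t • (x3 - x1) ∈ X := by
      intro s t hs ht hst
      rw [hXhull]
      have hmem := Finset.centerMass_mem_convexHull (Finset.univ : Finset (Fin 3))
        (w := ![1 - s - t, s, t]) (z := ![x1, x2, x3])
        (s := ({x1, x2, x3} : Set (EuclideanSpace ℝ (Fin n))))
        (by intro i _; fin_cases i <;> simp <;> linarith)
        (by simp [Fin.sum_univ_three]; linarith)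
        (by intro i _; fin_cases i <;> simp)
      have hcm : (Finset.univ : Finset (Fin 3)).centerMass ![1 - s - t, s, t] ![x1, x2, x3]
          = x1 + s • (x2 - x1) + t • (x3 - x1) := by
        have hsum1 : (∑ i : Fin 3, ![1 - s - t, s, t] i) = 1 := by
          simp [Fin.sum_univ_three]; ring
        rw [Finset.centerMass, hsum1, inv_one, one_smul, Fin.sum_univ_three]
        simp only [Matrix.cons_val_zero, Matrix.cons_val_one, Matrix.head_cons,
          Matrix.cons_val_two, Matrix.tail_cons]
        match_scalars <;> ring
      rw [← hcm]
      exact hmem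
    -- the determination argument
    intro Y hYmem hmatch
    obtain ⟨hYpoly, -⟩ := hYmem
    have hbound : ∀ y ∈ Y, ∀ d ∈ D, ⟪y, d⟫ ≤ Mf d := by
      intro y hy d hd
      rw [← hsuppX d, ← hmatch d hd]
      exact S13.inner_le_supp hYpoly hy d
    have hYsubX : Y ⊆ X := by
      intro y hy
      obtain ⟨s, t, hs, ht, hst, hyeq⟩ := hdec y (hbound y hy)
      rw [hyeq]
      exact hback s t hs ht hst
    -- x1 ∈ Y
    have hiu : ⟪x2 - x1, u1⟫ < 0 := by
      have e : ⟪x2 - x1, u1⟫ = ⟪x2 - x1, dA⟫ + ⟪x2 - x1, dB⟫ := by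
        rw [hu1]; exact inner_add_right _ _ _
      rw [e, hdA0]; linarith [hdB1]
    have hiv : ⟪x3 - x1, u1⟫ < 0 := by
      have e : ⟪x3 - x1, u1⟫ = ⟪x3 - x1, dA⟫ + ⟪x3 - x1, dB⟫ := by
        rw [hu1]; exact inner_add_right _ _ _
      rw [e, hdB0]; linarith [hdA1]
    have hsup_u1 : supp X u1 = ⟪x1, u1⟫ := by
      rw [hsuppX]
      have h2 := inner_sub_left (𝕜 := ℝ) x2 x1 u1
      have h3 := inner_sub_left (𝕜 := ℝ) x3 x1 u1
      have e2 : ⟪x2, u1⟫ ≤ ⟪x1, u1⟫ := by linarith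
      have e3 : ⟪x3, u1⟫ ≤ ⟪x1, u1⟫ := by linarith
      simp only [hMf]
      exact max_eq_left (max_le e2 e3)
    have hx1Y : x1 ∈ Y := by
      obtain ⟨y, hyY, hyeq⟩ := S13.exists_inner_eq_supp hYpoly u1
      rw [hmatch u1 hu1D, hsup_u1] at hyeq
      obtain ⟨s, t, hs, ht, hst, hrep⟩ := hdec y (hbound y hyY)
      rw [hrep, inner_add_left, inner_add_left, real_inner_smul_left,
        real_inner_smul_left] at hyeq
      have hyeq' : s * ⟪x2 - x1, u1⟫ + t * ⟪x3 - x1, u1⟫ = 0 := by linarith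
      have hP : s * ⟪x2 - x1, u1⟫ ≤ 0 := by
        nlinarith [mul_nonneg hs (neg_nonneg.mpr hiu.le)]
      have hQ : t * ⟪x3 - x1, u1⟫ ≤ 0 := by
        nlinarith [mul_nonneg ht (neg_nonneg.mpr hiv.le)]
      have hs0 : s = 0 := by
        have hP0 : s * ⟪x2 - x1, u1⟫ = 0 := by linarith
        rcases mul_eq_zero.mp hP0 with h | h
        · exact h
        · linarith
      have ht0 : t = 0 := by
        have hQ0 : t * ⟪x3 - x1, u1⟫ = 0 := by linarith
        rcases mul_eq_zero.mp hQ0 with h | h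
        · exact h
        · linarith
      rw [hs0, ht0] at hrep
      have hfin1 : x1 + (0:ℝ) • (x2 - x1) + (0:ℝ) • (x3 - x1) = x1 := by module
      rw [hrep, hfin1] at hyY
      exact hyY
    -- x2 ∈ Y
    have hj1 : ⟪x1 - x2, u2⟫ < 0 := by
      have e : ⟪x1 - x2, u2⟫ = ⟪x1 - x2, dC⟫ + ⟪x1 - x2, dD⟫ := by
        rw [hu2]; exact inner_add_right _ _ _
      rw [e, hdD0]; linarith [hdC1]
    have hj2 : ⟪x3 - x2, u2⟫ < 0 := by
      have e : ⟪x3 - x2, u2⟫ = ⟪x3 - x2, dC⟫ + ⟪x3 - x2, dD⟫ := by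
        rw [hu2]; exact inner_add_right _ _ _
      rw [e, hdC0]; linarith [hdD1]
    have hx2Y : x2 ∈ Y := by
      obtain ⟨y, hyY, hyeq⟩ := S13.exists_inner_eq_supp hYpoly u2
      have i1 := inner_sub_left (𝕜 := ℝ) x1 x2 u2
      have i2 := inner_sub_left (𝕜 := ℝ) x2 x1 u2
      have i3 := inner_sub_left (𝕜 := ℝ) x3 x2 u2
      have i4 := inner_sub_left (𝕜 := ℝ) x3 x1 u2
      have hsup_u2 : supp X u2 = ⟪x2, u2⟫ := by
        rw [hsuppX]
        have e1 : ⟪x1, u2⟫ ≤ ⟪x2, u2⟫ := by linarith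
        have e3 : ⟪x3, u2⟫ ≤ ⟪x2, u2⟫ := by linarith
        simp only [hMf]
        rw [max_eq_left e3, max_eq_right e1]
      rw [hmatch u2 hu2D, hsup_u2] at hyeq
      obtain ⟨s, t, hs, ht, hst, hrep⟩ := hdec y (hbound y hyY)
      rw [hrep, inner_add_left, inner_add_left, real_inner_smul_left,
        real_inner_smul_left] at hyeq
      have hα : 0 < ⟪x2 - x1, u2⟫ := by linarith
      have hβα : ⟪x3 - x1, u2⟫ < ⟪x2 - x1, u2⟫ := by linarith
      have hyeq' : s * ⟪x2 - x1, u2⟫ + t * ⟪x3 - x1, u2⟫ = ⟪x2 - x1, u2⟫ := by linarith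
      have h1 : 0 ≤ (1 - s - t) * ⟪x2 - x1, u2⟫ := mul_nonneg (by linarith) hα.le
      have hle : t * (⟪x2 - x1, u2⟫ - ⟪x3 - x1, u2⟫) ≤ 0 := by nlinarith [h1, hyeq']
      have hge : 0 ≤ t * (⟪x2 - x1, u2⟫ - ⟪x3 - x1, u2⟫) :=
        mul_nonneg ht (by linarith)
      have ht0 : t = 0 := by
        rcases mul_eq_zero.mp (le_antisymm hle hge) with h | h
        · exact h
        · linarith
      have hs1 : s = 1 := by
        rw [ht0, zero_mul, add_zero] at hyeq'
        have h' : (s - 1) * ⟪x2 - x1, u2⟫ = 0 := by linear_combination hyeq'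
        rcases mul_eq_zero.mp h' with h | h
        · linarith
        · linarith
      rw [hs1, ht0] at hrep
      have hfin2 : x1 + (1:ℝ) • (x2 - x1) + (0:ℝ) • (x3 - x1) = x2 := by module
      rw [hrep, hfin2] at hyY
      exact hyY
    -- x3 ∈ Y
    have hk1 : ⟪x1 - x3, u3⟫ < 0 := by
      have e : ⟪x1 - x3, u3⟫ = ⟪x1 - x3, dE⟫ + ⟪x1 - x3, dF⟫ := by
        rw [hu3]; exact inner_add_right _ _ _
      rw [e, hdE0]; linarith [hdF1]
    have hk2 : ⟪x2 - x3, u3⟫ < 0 := by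
      have e : ⟪x2 - x3, u3⟫ = ⟪x2 - x3, dE⟫ + ⟪x2 - x3, dF⟫ := by
        rw [hu3]; exact inner_add_right _ _ _
      rw [e, hdF0]; linarith [hdE1]
    have hx3Y : x3 ∈ Y := by
      obtain ⟨y, hyY, hyeq⟩ := S13.exists_inner_eq_supp hYpoly u3
      have i1 := inner_sub_left (𝕜 := ℝ) x1 x3 u3
      have i2 := inner_sub_left (𝕜 := ℝ) x3 x1 u3
      have i3 := inner_sub_left (𝕜 := ℝ) x2 x3 u3
      have i4 := inner_sub_left (𝕜 := ℝ) x2 x1 u3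
      have hsup_u3 : supp X u3 = ⟪x3, u3⟫ := by
        rw [hsuppX]
        have e1 : ⟪x1, u3⟫ ≤ ⟪x3, u3⟫ := by linarith
        have e2 : ⟪x2, u3⟫ ≤ ⟪x3, u3⟫ := by linarith
        simp only [hMf]
        rw [max_eq_right e2, max_eq_right e1]
      rw [hmatch u3 hu3D, hsup_u3] at hyeq
      obtain ⟨s, t, hs, ht, hst, hrep⟩ := hdec y (hbound y hyY)
      rw [hrep, inner_add_left, inner_add_left, real_inner_smul_left,
        real_inner_smul_left] at hyeq
      have hβ : 0 < ⟪x3 - x1, u3⟫ := by linarith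
      have hαβ : ⟪x2 - x1, u3⟫ < ⟪x3 - x1, u3⟫ := by linarith
      have hyeq' : s * ⟪x2 - x1, u3⟫ + t * ⟪x3 - x1, u3⟫ = ⟪x3 - x1, u3⟫ := by linarith
      have h1 : 0 ≤ (1 - s - t) * ⟪x3 - x1, u3⟫ := mul_nonneg (by linarith) hβ.le
      have hle : s * (⟪x3 - x1, u3⟫ - ⟪x2 - x1, u3⟫) ≤ 0 := by nlinarith [h1, hyeq']
      have hge : 0 ≤ s * (⟪x3 - x1, u3⟫ - ⟪x2 - x1, u3⟫) :=
        mul_nonneg hs (by linarith)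
      have hs0 : s = 0 := by
        rcases mul_eq_zero.mp (le_antisymm hle hge) with h | h
        · exact h
        · linarith
      have ht1 : t = 1 := by
        rw [hs0, zero_mul, zero_add] at hyeq'
        have h' : (t - 1) * ⟪x3 - x1, u3⟫ = 0 := by linear_combination hyeq'
        rcases mul_eq_zero.mp h' with h | h
        · linarith
        · linarith
      rw [hs0, ht1] at hrep
      have hfin3 : x1 + (0:ℝ) • (x2 - x1) + (1:ℝ) • (x3 - x1) = x3 := by module
      rw [hrep, hfin3] at hyY
      exact hyY
    have hXsubY : X ⊆ Y := by
      rw [hXhull]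
      refine convexHull_min ?_ (S13.convex_poly hYpoly)
      intro z hz
      simp only [Set.mem_insert_iff, Set.mem_singleton_iff] at hz
      rcases hz with rfl | rfl | rfl
      · exact hx1Y
      · exact hx2Y
      · exact hx3Y
    exact Set.Subset.antisymm hYsubX hXsubY
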